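/- The number of palindromic vacillating tableaux of length 2n with all partitions having at most one row (height bounded by 1) equals C(n, ⌊n/2⌋). -/

import Mathlib

/-- A palindromic vacillating tableau of length `2n` with height bounded by 1,
encoded as a sequence of one-row partition sizes `ν 0, ..., ν (2n)`. -/
def IsPalVacTab (n : ℕ) (ν : Fin (2 * n + 1) → ℕ) : Prop :=
  ν ⟨0, by omega⟩ = 0 ∧ ν ⟨2 * n, by omega⟩ = 0 ∧
  (∀ j : ℕ, (h : j < 2 * n) →
    if Even j then
      -- step to an odd index: do nothing or delete a square
      ν ⟨j + 1, by omega⟩ = ν ⟨j, by omega⟩ ∨ ν ⟨j + 1, by omega⟩ + 1 = ν ⟨j, by omega⟩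
    else
      -- step to an even index: do nothing or add a square
      ν ⟨j + 1, by omega⟩ = ν ⟨j, by omega⟩ ∨ ν ⟨j + 1, by omega⟩ = ν ⟨j, by omega⟩ + 1) ∧
  (∀ j : ℕ, (h : j ≤ 2 * n) → ν ⟨j, by omega⟩ = ν ⟨2 * n - j, by omega⟩)

namespace PVT


def f : ℕ → ℕ → ℕ
  | 0, 0 => 1
  | 0, _+1 => 0
  | n+1, h => if Even n then f n h + f n (h+1)
              else f n h + (if h = 0 then 0 else f n (h-1))

lemma pascal (a b : ℕ) : (a+1).choose (b+1) = a.choose b + a.choose (b+1) :=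
  Nat.choose_succ_succ a b

lemma f_succ_even (n h : ℕ) (he : Even n) : f (n+1) h = f n h + f n (h+1) := by
  simp [f, he]

lemma f_succ_odd_zero (n : ℕ) (ho : ¬ Even n) : f (n+1) 0 = f n 0 := by
  simp [f, ho]

lemma f_succ_odd (n k : ℕ) (ho : ¬ Even n) : f (n+1) (k+1) = f n (k+1) + f n k := by
  simp [f, ho]

lemma f_eq (n : ℕ) : ∀ h, f n h + n.choose (h + (n+1)/2 + 1) = n.choose (h + (n+1)/2) := by
  induction n with
  | zero =>
    intro h
    cases h with
    | zero => simp [f]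
    | succ k => simp [f, Nat.choose_eq_zero_of_lt]
  | succ n ih =>
    intro h
    rcases Nat.even_or_odd n with he | ho
    · -- n even, c = n/2, c' = c+1
      obtain ⟨m, hm⟩ := he
      have hc : (n+1)/2 = m := by omega
      have hc' : (n+2)/2 = m + 1 := by omega
      have h1 := ih h
      have h2 := ih (h+1)
      rw [hc] at h1 h2
      rw [show h + 1 + m + 1 = h + m + 2 from by omega,
          show h + 1 + m = h + m + 1 from by omega] at h2
      have p1 : (n+1).choose (h + m + 2) = n.choose (h + m + 1) + n.choose (h + m + 2) :=
        pascal n (h + m + 1)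
      have p2 : (n+1).choose (h + m + 1) = n.choose (h + m) + n.choose (h + m + 1) :=
        pascal n (h + m)
      rw [f_succ_even n h ⟨m, hm⟩, hc',
          show h + (m + 1) + 1 = h + m + 2 from by omega,
          show h + (m + 1) = h + m + 1 from by omega, p1, p2]
      omega
    · -- n odd, c = (n+1)/2 = c'
      obtain ⟨m, hm⟩ := ho
      have hne : ¬ Even n := by
        rw [Nat.not_even_iff_odd]; exact ⟨m, hm⟩
      have hc : (n+1)/2 = m + 1 := by omega
      have hc' : (n+2)/2 = m + 1 := by omega
      have sym : n.choose m = n.choose (m+1) := by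
        have hs := Nat.choose_symm (show m+1 ≤ n from by omega)
        rw [show n - (m+1) = m from by omega] at hs
        exact hs
      cases h with
      | zero =>
        have h1 := ih 0
        rw [hc] at h1
        rw [show 0 + (m + 1) + 1 = m + 2 from by omega,
            show 0 + (m + 1) = m + 1 from by omega] at h1
        rw [f_succ_odd_zero n hne, hc',
            show 0 + (m + 1) + 1 = m + 2 from by omega,
            show 0 + (m + 1) = m + 1 from by omega]
        have p1 : (n+1).choose (m + 2) = n.choose (m + 1) + n.choose (m + 2) :=
          pascal n (m + 1)
        have p2 : (n+1).choose (m + 1) = n.choose m + n.choose (m + 1) :=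
          pascal n m
        omega
      | succ k =>
        have h1 := ih (k+1)
        have h2 := ih k
        rw [hc] at h1 h2
        rw [show k + 1 + (m + 1) + 1 = k + m + 3 from by omega,
            show k + 1 + (m + 1) = k + m + 2 from by omega] at h1
        rw [show k + (m + 1) + 1 = k + m + 2 from by omega,
            show k + (m + 1) = k + m + 1 from by omega] at h2
        rw [f_succ_odd n k hne, hc',
            show k + 1 + (m + 1) + 1 = k + m + 3 from by omega,
            show k + 1 + (m + 1) = k + m + 2 from by omega]
        have p1 : (n+1).choose (k + m + 3) = n.choose (k + m + 2) + n.choose (k + m + 3) :=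
          pascal n (k + m + 2)
        have p2 : (n+1).choose (k + m + 2) = n.choose (k + m + 1) + n.choose (k + m + 2) :=
          pascal n (k + m + 1)
        omega

lemma f_sum (n : ℕ) : ∀ N, (∑ h ∈ Finset.range N, f n h) + n.choose (N + (n+1)/2) = n.choose ((n+1)/2) := by
  intro N
  induction N with
  | zero => simp
  | succ N ih =>
    rw [Finset.sum_range_succ]
    have h1 := f_eq n N
    have e : N + 1 + (n+1)/2 = N + (n+1)/2 + 1 := by omega
    rw [e]
    omega

lemma f_total (n : ℕ) : (∑ h ∈ Finset.range (n+1), f n h) = n.choose (n / 2) := by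
  have h1 := f_sum n (n+1)
  have h2 : n.choose (n + 1 + (n+1)/2) = 0 := Nat.choose_eq_zero_of_lt (by omega)
  have h3 : n.choose ((n+1)/2) = n.choose (n/2) := by
    rcases Nat.even_or_odd n with ⟨m, hm⟩ | ⟨m, hm⟩
    · rw [show (n+1)/2 = n/2 from by omega]
    · have hs := Nat.choose_symm (show m+1 ≤ n from by omega)
      rw [show n - (m+1) = m from by omega] at hs
      rw [show (n+1)/2 = m+1 from by omega, show n/2 = m from by omega]
      exact hs.symm
  omega



def Step (a : ℕ → ℕ) (j : ℕ) : Prop :=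
  if Even j then a (j+1) = a j ∨ a (j+1) + 1 = a j
  else a (j+1) = a j ∨ a (j+1) = a j + 1

def Sk (n h : ℕ) : Set (ℕ → ℕ) :=
  {a | a 0 = 0 ∧ (∀ j < n, Step a j) ∧ a n = h ∧ ∀ j, n < j → a j = 0}

lemma update_mem_Sk {n p : ℕ} {a : ℕ → ℕ} (ha : a ∈ Sk n p) (h : ℕ)
    (hstep : if Even n then h = p ∨ h + 1 = p else h = p ∨ h = p + 1) :
    Function.update a (n+1) h ∈ Sk (n+1) h := by
  obtain ⟨h0, hs, hend, htail⟩ := ha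
  refine ⟨?_, ?_, ?_, ?_⟩
  · rw [Function.update_of_ne (by omega)]; exact h0
  · intro j hj
    rcases Nat.lt_or_ge j n with hjn | hjn
    · have hsj := hs j hjn
      unfold Step at hsj ⊢
      rw [Function.update_of_ne (show j + 1 ≠ n+1 by omega),
          Function.update_of_ne (show j ≠ n+1 by omega)]
      exact hsj
    · have hj' : j = n := by omega
      subst hj'
      unfold Step
      rw [Function.update_self, Function.update_of_ne (show j ≠ j+1 by omega), hend]
      by_cases hE : Even j
      · rw [if_pos hE] at hstep ⊢; omega
      · rw [if_neg hE] at hstep ⊢; omega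
  · rw [Function.update_self]
  · intro j hjgt
    rw [Function.update_of_ne (show j ≠ n+1 by omega)]
    exact htail j (by omega)

lemma restrict_mem {n h : ℕ} {b : ℕ → ℕ} (hb : b ∈ Sk (n+1) h) :
    Function.update b (n+1) 0 ∈ Sk n (b n) ∧
    Function.update (Function.update b (n+1) 0) (n+1) h = b ∧
    (if Even n then h = b n ∨ h + 1 = b n else h = b n ∨ h = b n + 1) := by
  obtain ⟨h0, hs, hend, htail⟩ := hb
  refine ⟨⟨?_, ?_, ?_, ?_⟩, ?_, ?_⟩
  · rw [Function.update_of_ne (by omega)]; exact h0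
  · intro j hj
    have hsj := hs j (by omega)
    unfold Step at hsj ⊢
    rw [Function.update_of_ne (show j + 1 ≠ n+1 by omega),
        Function.update_of_ne (show j ≠ n+1 by omega)]
    exact hsj
  · rw [Function.update_of_ne (show n ≠ n+1 by omega)]
  · intro j hjgt
    rcases eq_or_ne j (n+1) with rfl | hne
    · rw [Function.update_self]
    · rw [Function.update_of_ne hne]; exact htail j (by omega)
  · funext j
    rcases eq_or_ne j (n+1) with rfl | hne
    · rw [Function.update_self, hend]
    · rw [Function.update_of_ne hne, Function.update_of_ne hne]
  · have hsn := hs n (by omega)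
    unfold Step at hsn
    by_cases hE : Even n
    · rw [if_pos hE] at hsn ⊢; omega
    · rw [if_neg hE] at hsn ⊢; omega

lemma u_injOn (n h p : ℕ) :
    Set.InjOn (fun a => Function.update a (n+1) h) (Sk n p) := by
  intro a ha b hb hab
  funext j
  rcases eq_or_ne j (n+1) with rfl | hj
  · rw [ha.2.2.2 _ (by omega), hb.2.2.2 _ (by omega)]
  · have hcf := congrFun hab j
    simp only at hcf
    rwa [Function.update_of_ne hj, Function.update_of_ne hj] at hcf

lemma mem_image_val {n p h : ℕ} {x : ℕ → ℕ}
    (hx : x ∈ (fun a => Function.update a (n+1) h) '' Sk n p) : x n = p := by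
  obtain ⟨a, ha, rfl⟩ := hx
  simp only
  rw [Function.update_of_ne (show n ≠ n+1 by omega)]
  exact ha.2.2.1

lemma images_disjoint {n p q h : ℕ} (hpq : p ≠ q) :
    Disjoint ((fun a => Function.update a (n+1) h) '' Sk n p)
      ((fun a => Function.update a (n+1) h) '' Sk n q) := by
  rw [Set.disjoint_left]
  intro x hxp hxq
  exact hpq ((mem_image_val hxp).symm.trans (mem_image_val hxq))

lemma Sk_succ_even (n h : ℕ) (he : Even n) :
    Sk (n+1) h = (fun a => Function.update a (n+1) h) '' Sk n h ∪
      (fun a => Function.update a (n+1) h) '' Sk n (h+1) := by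
  ext b
  constructor
  · intro hb
    obtain ⟨hmem, heq, hstep⟩ := restrict_mem hb
    rw [if_pos he] at hstep
    rcases hstep with h1 | h1
    · left; exact ⟨_, h1 ▸ hmem, heq⟩
    · right; exact ⟨_, h1 ▸ hmem, heq⟩
  · rintro (⟨a, ha, rfl⟩ | ⟨a, ha, rfl⟩)
    · exact update_mem_Sk ha h (by rw [if_pos he]; left; rfl)
    · exact update_mem_Sk ha h (by rw [if_pos he]; right; rfl)

lemma Sk_succ_odd_zero (n : ℕ) (ho : ¬ Even n) :
    Sk (n+1) 0 = (fun a => Function.update a (n+1) 0) '' Sk n 0 := by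
  ext b
  constructor
  · intro hb
    obtain ⟨hmem, heq, hstep⟩ := restrict_mem hb
    rw [if_neg ho] at hstep
    have : b n = 0 := by omega
    exact ⟨_, this ▸ hmem, heq⟩
  · rintro ⟨a, ha, rfl⟩
    exact update_mem_Sk ha 0 (by rw [if_neg ho]; left; rfl)

lemma Sk_succ_odd (n k : ℕ) (ho : ¬ Even n) :
    Sk (n+1) (k+1) = (fun a => Function.update a (n+1) (k+1)) '' Sk n (k+1) ∪
      (fun a => Function.update a (n+1) (k+1)) '' Sk n k := by
  ext b
  constructor
  · intro hb
    obtain ⟨hmem, heq, hstep⟩ := restrict_mem hb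
    rw [if_neg ho] at hstep
    rcases hstep with h1 | h1
    · left; exact ⟨_, h1 ▸ hmem, heq⟩
    · right; exact ⟨_, (by omega : b n = k) ▸ hmem, heq⟩
  · rintro (⟨a, ha, rfl⟩ | ⟨a, ha, rfl⟩)
    · exact update_mem_Sk ha (k+1) (by rw [if_neg ho]; left; rfl)
    · exact update_mem_Sk ha (k+1) (by rw [if_neg ho]; right; rfl)




lemma Sk_zero_zero : Sk 0 0 = {fun _ => 0} := by
  ext a
  constructor
  · rintro ⟨h0, -, -, htail⟩
    funext j
    cases j with
    | zero => exact h0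
    | succ k => exact htail (k+1) (by omega)
  · rintro rfl
    exact ⟨rfl, by intro j hj; omega, rfl, fun j _ => rfl⟩

lemma Sk_zero_succ (k : ℕ) : Sk 0 (k+1) = ∅ := by
  ext a
  simp only [Set.mem_empty_iff_false, iff_false]
  rintro ⟨h0, -, hend, -⟩
  omega

lemma Sk_card (n : ℕ) : ∀ h, (Sk n h).Finite ∧ (Sk n h).ncard = f n h := by
  induction n with
  | zero =>
    intro h
    cases h with
    | zero => rw [Sk_zero_zero]; exact ⟨Set.finite_singleton _, by simp [f]⟩
    | succ k => rw [Sk_zero_succ]; exact ⟨Set.finite_empty, by simp [f]⟩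
  | succ n ih =>
    intro h
    by_cases hE : Even n
    · rw [Sk_succ_even n h hE, f_succ_even n h hE]
      obtain ⟨hf1, hc1⟩ := ih h
      obtain ⟨hf2, hc2⟩ := ih (h+1)
      have hi1 := hf1.image (fun a => Function.update a (n+1) h)
      have hi2 := hf2.image (fun a => Function.update a (n+1) h)
      refine ⟨hi1.union hi2, ?_⟩
      rw [Set.ncard_union_eq (images_disjoint (by omega)) hi1 hi2,
          Set.ncard_image_of_injOn (u_injOn n h h),
          Set.ncard_image_of_injOn (u_injOn n h (h+1)), hc1, hc2]
    · cases h with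
      | zero =>
        rw [Sk_succ_odd_zero n hE, f_succ_odd_zero n hE]
        obtain ⟨hf1, hc1⟩ := ih 0
        exact ⟨hf1.image _, by
          rw [Set.ncard_image_of_injOn (u_injOn n 0 0), hc1]⟩
      | succ k =>
        rw [Sk_succ_odd n k hE, f_succ_odd n k hE]
        obtain ⟨hf1, hc1⟩ := ih (k+1)
        obtain ⟨hf2, hc2⟩ := ih k
        have hi1 := hf1.image (fun a => Function.update a (n+1) (k+1))
        have hi2 := hf2.image (fun a => Function.update a (n+1) (k+1))
        refine ⟨hi1.union hi2, ?_⟩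
        rw [Set.ncard_union_eq (images_disjoint (by omega)) hi1 hi2,
            Set.ncard_image_of_injOn (u_injOn n (k+1) (k+1)),
            Set.ncard_image_of_injOn (u_injOn n (k+1) k), hc1, hc2]

def Sfull (n : ℕ) : Set (ℕ → ℕ) :=
  {a | a 0 = 0 ∧ (∀ j < n, Step a j) ∧ ∀ j, n < j → a j = 0}

lemma height_bound {n : ℕ} {a : ℕ → ℕ} (h0 : a 0 = 0) (hs : ∀ j < n, Step a j) :
    ∀ j ≤ n, a j ≤ j := by
  intro j
  induction j with
  | zero => intro _; omega
  | succ k ihk =>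
    intro hk
    have hk' := ihk (by omega)
    have hsk := hs k (by omega)
    unfold Step at hsk
    by_cases hE : Even k
    · rw [if_pos hE] at hsk; omega
    · rw [if_neg hE] at hsk; omega

lemma Sfull_eq (n : ℕ) :
    Sfull n = ⋃ h ∈ Finset.range (n+1), Sk n h := by
  ext a
  simp only [Set.mem_iUnion, Finset.mem_range]
  constructor
  · rintro ⟨h0, hs, htail⟩
    exact ⟨a n, by
      have := height_bound h0 hs n (le_refl n); omega, h0, hs, rfl, htail⟩
  · rintro ⟨h, -, h0, hs, -, htail⟩
    exact ⟨h0, hs, htail⟩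

lemma Sfull_ncard (n : ℕ) :
    (Sfull n).ncard = ∑ h ∈ Finset.range (n+1), f n h := by
  classical
  have hT : Sfull n = ↑((Finset.range (n+1)).biUnion
      (fun h => (Sk_card n h).1.toFinset)) := by
    rw [Sfull_eq]
    ext a
    simp [Set.Finite.mem_toFinset]
  rw [hT, Set.ncard_coe_finset]
  rw [Finset.card_biUnion]
  · apply Finset.sum_congr rfl
    intro h _
    rw [← Set.ncard_eq_toFinset_card _ (Sk_card n h).1, (Sk_card n h).2]
  · intro p hp q hq hpq
    rw [Function.onFun, Finset.disjoint_left]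
    intro a hap haq
    rw [Set.Finite.mem_toFinset] at hap haq
    exact hpq ((hap.2.2.1).symm.trans haq.2.2.1)



def Phi (n : ℕ) (ν : Fin (2*n+1) → ℕ) : ℕ → ℕ :=
  fun j => if hj : j ≤ n then ν ⟨j, by omega⟩ else 0

lemma Phi_mapsTo {n : ℕ} {ν : Fin (2*n+1) → ℕ} (hν : IsPalVacTab n ν) :
    Phi n ν ∈ Sfull n := by
  obtain ⟨h0, h2n, hstep, hpal⟩ := hν
  refine ⟨?_, ?_, ?_⟩
  · show (if hj : 0 ≤ n then ν ⟨0, by omega⟩ else 0) = 0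
    rw [dif_pos (Nat.zero_le n)]
    exact h0
  · intro j hj
    have hs := hstep j (by omega)
    unfold Step
    have e1 : Phi n ν (j+1) = ν ⟨j+1, by omega⟩ := dif_pos (by omega)
    have e2 : Phi n ν j = ν ⟨j, by omega⟩ := dif_pos (by omega)
    rw [e1, e2]
    exact hs
  · intro j hjgt
    exact dif_neg (by omega)

lemma Phi_injOn (n : ℕ) : Set.InjOn (Phi n) {ν | IsPalVacTab n ν} := by
  intro ν hν μ hμ he
  funext j
  obtain ⟨j, hj⟩ := j
  by_cases hjn : j ≤ n
  · have hc := congrFun he j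
    simp only [Phi, dif_pos hjn] at hc
    exact hc
  · have hj2 : j ≤ 2*n := by omega
    have hpν := hν.2.2.2 j hj2
    have hpμ := hμ.2.2.2 j hj2
    have hc := congrFun he (2*n - j)
    simp only [Phi, dif_pos (show 2*n - j ≤ n by omega)] at hc
    exact hpν.trans (hc.trans hpμ.symm)

lemma Phi_surjOn (n : ℕ) :
    Sfull n ⊆ Phi n '' {ν | IsPalVacTab n ν} := by
  rintro a ⟨h0, hs, htail⟩
  set g : ℕ → ℕ := fun j => if j ≤ n then a j else a (2*n - j) with hgdef
  have hg1 : ∀ j, j ≤ n → g j = a j := fun j hj => if_pos hj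
  have hg2 : ∀ j, n ≤ j → g j = a (2*n - j) := by
    intro j h1
    by_cases h2 : j ≤ n
    · rw [show 2*n - j = j from by omega]
      exact hg1 j h2
    · exact if_neg h2
  refine ⟨fun j => g j.val, ?_, ?_⟩
  · refine ⟨?_, ?_, ?_, ?_⟩
    · show g 0 = 0
      rw [hg1 0 (Nat.zero_le n), h0]
    · show g (2*n) = 0
      rw [hg2 (2*n) (by omega), show 2*n - 2*n = 0 from by omega, h0]
    · intro j hj
      show if Even j then g (j+1) = g j ∨ g (j+1) + 1 = g j
           else g (j+1) = g j ∨ g (j+1) = g j + 1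
      by_cases hjn : j + 1 ≤ n
      · rw [hg1 (j+1) hjn, hg1 j (by omega)]
        have hsj := hs j (by omega)
        unfold Step at hsj
        exact hsj
      · have hn : n ≤ j := by omega
        have e1 : g (j+1) = a (2*n - j - 1) := by
          rw [hg2 (j+1) (by omega)]; congr 1
        have e2 : g j = a (2*n - j - 1 + 1) := by
          rw [hg2 j hn]; congr 1; omega
        have hstepi := hs (2*n - j - 1) (by omega)
        unfold Step at hstepi
        rw [e1, e2]
        by_cases hEj : Even j
        · rw [if_pos hEj]
          rw [Nat.even_iff] at hEj
          have hEi : ¬ Even (2*n - j - 1) := by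
            rw [Nat.even_iff]; omega
          rw [if_neg hEi] at hstepi
          omega
        · rw [if_neg hEj]
          rw [Nat.even_iff] at hEj
          have hEi : Even (2*n - j - 1) := by
            rw [Nat.even_iff]; omega
          rw [if_pos hEi] at hstepi
          omega
    · intro j hj
      show g j = g (2*n - j)
      by_cases hjn : j ≤ n
      · rw [hg1 j hjn, hg2 (2*n - j) (by omega),
            show 2*n - (2*n - j) = j from by omega]
      · rw [hg2 j (by omega), hg1 (2*n - j) (by omega)]
  · funext j
    by_cases hj : j ≤ n
    · show (if hj : j ≤ n then g j else 0) = a j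
      rw [dif_pos hj]
      exact hg1 j hj
    · show (if hj : j ≤ n then g j else 0) = a j
      rw [dif_neg hj]
      exact (htail j (by omega)).symm


end PVT

theorem stmt4 (n : ℕ) :
    {ν : Fin (2 * n + 1) → ℕ | IsPalVacTab n ν}.ncard = n.choose (n / 2) := by
  have himg : PVT.Phi n '' {ν | IsPalVacTab n ν} = PVT.Sfull n := by
    apply Set.Subset.antisymm
    · rintro x ⟨ν, hν, rfl⟩
      exact PVT.Phi_mapsTo hν
    · exact PVT.Phi_surjOn n
  rw [← Set.ncard_image_of_injOn (PVT.Phi_injOn n), himg, PVT.Sfull_ncard, PVT.f_total]
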